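/- arXiv:1003.4144 — 2 statements merged into one kernel-verified Lean document; each statement's English description precedes it below -/
import Mathlib

section
/- Write ρ1 = A1·w + B1 and ρ2 = A2·w + B2 as polynomials in w, where A1 = p66·z + p46, B1 = −z⁴ + p56·z³ + p36·z² + p26·z + p16, A2 = −2z² + (p56 − p666)·z + (p45 − p466), B2 = (p55 − p566)·z³ + (p35 − p366)·z² + (p25 − p266)·z + (p15 − p166). Then the resultant of ρ1 and ρ2 with respect to w satisfies the identity A1·B2 − A2·B1 = ρ12 in R[z], where ρ12 = −2z⁶ + (3p56 − p666)z⁵ + (p55p66 + 2p36 − p56² + p45 − p566p66 + p56p666 − p466)z⁴ + (2p26 − p56p45 + p35p66 − p566p46 + p55p46 − p366p66 + p56p466 − p36p56 + p36p666)z³ + (2p16 + p35p46 − p266p66 − p366p46 + p26p666 − p26p56 + p25p66 − p36p45 + p36p466)z² + (p16p666 − p266p46 − p16p56 − p26p45 + p15p66 − p166p66 + p25p46 + p26p466)z − p16p45 − p166p46 + p15p46 + p16p466. Consequently, for any commutative ring S, any ring homomorphism R → S, and any elements z, w ∈ S with ρ1(z,w) = 0 and ρ2(z,w) = 0, the element ρ12(z)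 is 0. -/
/-- The degree-six resultant polynomial `ρ12` arising from the Kleinian formula for the
cyclic (3,7)-curve, with the 2- and 3-index ℘-values as parameters. -/
def rho12 {S : Type*} [CommRing S]
    (p16 p26 p36 p46 p56 p66 p15 p25 p35 p45 p55
     p166 p266 p366 p466 p566 p666 z : S) : S :=
  -2 * z ^ 6 + (3 * p56 - p666) * z ^ 5
    + (p55 * p66 + 2 * p36 - p56 ^ 2 + p45 - p566 * p66 + p56 * p666 - p466) * z ^ 4
    + (2 * p26 - p56 * p45 + p35 * p66 - p566 * p46 + p55 * p46 - p366 * p66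
        + p56 * p466 - p36 * p56 + p36 * p666) * z ^ 3
    + (2 * p16 + p35 * p46 - p266 * p66 - p366 * p46 + p26 * p666 - p26 * p56
        + p25 * p66 - p36 * p45 + p36 * p466) * z ^ 2
    + (p16 * p666 - p266 * p46 - p16 * p56 - p26 * p45 + p15 * p66 - p166 * p66
        + p25 * p46 + p26 * p466) * z
    - p16 * p45 - p166 * p46 + p15 * p46 + p16 * p466

/-- with `ρ1 = A1·w + B1`, `ρ2 = A2·w + B2`, the resultant identity
`A1·B2 − A2·B1 = ρ12` holds, and consequently for any commutative ring `S` and any values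
`z, w` with `ρ1(z,w) = 0` and `ρ2(z,w) = 0` one has `ρ12(z) = 0`. -/
theorem stmt_0 {S : Type*} [CommRing S]
    (p16 p26 p36 p46 p56 p66 p15 p25 p35 p45 p55
     p166 p266 p366 p466 p566 p666 z w : S) :
    ((p66 * z + p46) *
        ((p55 - p566) * z ^ 3 + (p35 - p366) * z ^ 2 + (p25 - p266) * z + (p15 - p166))
      - (-2 * z ^ 2 + (p56 - p666) * z + (p45 - p466)) *
        (-z ^ 4 + p56 * z ^ 3 + p36 * z ^ 2 + p26 * z + p16)
      = rho12 p16 p26 p36 p46 p56 p66 p15 p25 p35 p45 p55 p166 p266 p366 p466 p566 p666 z)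
    ∧
    ((-z ^ 4 + p56 * z ^ 3 + p36 * z ^ 2 + (p66 * w + p26) * z + p46 * w + p16 = 0) →
      ((p55 - p566) * z ^ 3 + (p35 - 2 * w - p366) * z ^ 2
          + (p25 - p266 + p56 * w - p666 * w) * z + p15 - p466 * w - p166 + p45 * w = 0) →
      rho12 p16 p26 p36 p46 p56 p66 p15 p25 p35 p45 p55 p166 p266 p366 p466 p566 p666 z = 0) := by
  unfold rho12
  constructor
  · ring
  · intro h1 h2
    linear_combination (p66 * z + p46) * h2 - (-2 * z ^ 2 + (p56 - p666) * z + (p45 - p466)) * h1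
end

section
/- Suppose the two 4-index relations ℘_{5666} = 6℘_{56}℘_{66} + 3℘_{46} + 3λ6℘_{66} and ℘_{5566} = 4℘_{36} − ℘_{45} + 3λ6℘_{56} + 2λ5 + 2℘_{55}℘_{66} + 4℘_{56}² hold identically on U. Then the bilinear identity 0 = −2℘_{366} + 2℘_{456} − ℘_{55}℘_{666} − ℘_{56}℘_{566} + 2℘_{66}℘_{556} holds identically on U. (It is obtained by substituting the two hypothesised relations into ∂℘_{5666}/∂u_5 − ∂℘_{5566}/∂u_6 = 0.) -/
/-- Partial derivative in the `i`-th coordinate direction of a function `ℂ⁶ → ℂ`. -/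
noncomputable def pd (i : Fin 6) (f : (Fin 6 → ℂ) → ℂ) : (Fin 6 → ℂ) → ℂ :=
  fun u => fderiv ℂ f u (Pi.single i 1)

/-- `∂_j log σ = ∂_j σ / σ` (independent of the choice of branch of `log σ`). -/
noncomputable def dlog (σ : (Fin 6 → ℂ) → ℂ) (j : Fin 6) : (Fin 6 → ℂ) → ℂ :=
  fun u => pd j σ u / σ u

/-- The 2-index Kleinian ℘-function `℘_{ij} = −∂_i ∂_j log σ`
(here the variable `u_k` corresponds to the coordinate `k − 1 : Fin 6`). -/
noncomputable def wp2 (σ : (Fin 6 → ℂ) → ℂ) (i j : Fin 6) : (Fin 6 → ℂ) → ℂ :=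
  fun u => -(pd i (dlog σ j) u)

/-- The 3-index Kleinian ℘-function `℘_{ijk} = −∂_i ∂_j ∂_k log σ`. -/
noncomputable def wp3 (σ : (Fin 6 → ℂ) → ℂ) (i j k : Fin 6) : (Fin 6 → ℂ) → ℂ :=
  fun u => -(pd i (pd j (dlog σ k)) u)

/-- The 4-index Kleinian ℘-function `℘_{ijkl} = −∂_i ∂_j ∂_k ∂_l log σ`. -/
noncomputable def wp4 (σ : (Fin 6 → ℂ) → ℂ) (i j k l : Fin 6) : (Fin 6 → ℂ) → ℂ :=
  fun u => -(pd i (pd j (pd k (dlog σ l))) u)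

section Aux

variable {U : Set (Fin 6 → ℂ)} {f g σ : (Fin 6 → ℂ) → ℂ} {u : Fin 6 → ℂ} {i j k : Fin 6}

private lemma pdA (hf : AnalyticOnNhd ℂ f U) (i : Fin 6) :
    AnalyticOnNhd ℂ (pd i f) U := fun u hu =>
  ((ContinuousLinearMap.apply ℂ ℂ (Pi.single i 1 : Fin 6 → ℂ)).analyticAt _).comp (hf u hu).fderiv

private lemma pd_congr (hU : IsOpen U) (hu : u ∈ U) (h : ∀ x ∈ U, f x = g x) (i : Fin 6) :
    pd i f u = pd i g u := by
  unfold pd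
  rw [Filter.EventuallyEq.fderiv_eq (by filter_upwards [hU.mem_nhds hu] with x hx using h x hx)]

private lemma pd_comm (hf : AnalyticOnNhd ℂ f U) (hu : u ∈ U) (i j : Fin 6) :
    pd i (pd j f) u = pd j (pd i f) u := by
  have hsym : IsSymmSndFDerivAt ℂ f u :=
    ((hf u hu).contDiffAt (n := 2)).isSymmSndFDerivAt (by simp)
  have key : ∀ k l : Fin 6,
      pd k (pd l f) u = fderiv ℂ (fderiv ℂ f) u (Pi.single k 1) (Pi.single l 1) := by
    intro k l
    have hdf : DifferentiableAt ℂ (fderiv ℂ f) u := (hf u hu).fderiv.differentiableAt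
    show fderiv ℂ (fun x => (fderiv ℂ f x) (Pi.single l 1)) u (Pi.single k 1) = _
    rw [fderiv_clm_apply hdf (differentiableAt_const _)]
    simp
  rw [key, key]
  exact hsym _ _

private lemma pd_neg : pd i (fun x => -(f x)) u = -(pd i f u) := by
  unfold pd; rw [fderiv_fun_neg]; simp

private lemma pd_add (hf : DifferentiableAt ℂ f u) (hg : DifferentiableAt ℂ g u) :
    pd i (fun x => f x + g x) u = pd i f u + pd i g u := by
  unfold pd; rw [fderiv_fun_add hf hg]; simp

private lemma pd_sub (hf : DifferentiableAt ℂ f u) (hg : DifferentiableAt ℂ g u) :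
    pd i (fun x => f x - g x) u = pd i f u - pd i g u := by
  unfold pd; rw [fderiv_fun_sub hf hg]; simp

private lemma pd_mul (hf : DifferentiableAt ℂ f u) (hg : DifferentiableAt ℂ g u) :
    pd i (fun x => f x * g x) u = pd i f u * g u + f u * pd i g u := by
  unfold pd; rw [fderiv_fun_mul hf hg]; simp [smul_eq_mul]; ring

private lemma pd_const_mul (hf : DifferentiableAt ℂ f u) (c : ℂ) :
    pd i (fun x => c * f x) u = c * pd i f u := by
  unfold pd; rw [fderiv_const_mul hf]; simp

private lemma pd_const (c : ℂ) : pd i (fun _ => c) u = 0 := by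
  unfold pd; simp

private lemma pd_wp2 : pd i (wp2 σ j k) u = wp3 σ i j k u := pd_neg

private lemma dlog_symm (hU : IsOpen U) (hσ : AnalyticOnNhd ℂ σ U)
    (hσ0 : ∀ x ∈ U, σ x ≠ 0) (hu : u ∈ U) (j k : Fin 6) :
    pd j (dlog σ k) u = pd k (dlog σ j) u := by
  have hL : ∀ m : Fin 6, AnalyticOnNhd ℂ (dlog σ m) U := fun m x hx =>
    ((pdA hσ m) x hx).div (hσ x hx) (hσ0 x hx)
  have hid : ∀ m : Fin 6, ∀ x ∈ U, pd m σ x = σ x * dlog σ m x := by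
    intro m x hx
    unfold dlog
    rw [mul_comm, div_mul_cancel₀ _ (hσ0 x hx)]
  have key : ∀ a b : Fin 6, pd a (pd b σ) u
      = pd a σ u * dlog σ b u + σ u * pd a (dlog σ b) u := by
    intro a b
    rw [pd_congr hU hu (hid b) a,
      pd_mul ((hσ u hu).differentiableAt) ((hL b u hu).differentiableAt)]
  have comm := pd_comm hσ hu j k
  rw [key j k, key k j] at comm
  have hcross : pd j σ u * dlog σ k u = pd k σ u * dlog σ j u := by
    unfold dlog; ring
  have h2 : σ u * pd j (dlog σ k) u = σ u * pd k (dlog σ j) u := by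
    linear_combination comm - hcross
  exact mul_left_cancel₀ (hσ0 u hu) h2

end Aux

/-- if `℘_{5666} = 6℘_{56}℘_{66} + 3℘_{46} + 3λ6℘_{66}` and
`℘_{5566} = 4℘_{36} − ℘_{45} + 3λ6℘_{56} + 2λ5 + 2℘_{55}℘_{66} + 4℘_{56}²` hold identically
on `U`, then the bilinear identity
`0 = −2℘_{366} + 2℘_{456} − ℘_{55}℘_{666} − ℘_{56}℘_{566} + 2℘_{66}℘_{556}` holds identically
on `U`. -/
theorem stmt_17 (U : Set (Fin 6 → ℂ)) (hU : IsOpen U)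
    (σ : (Fin 6 → ℂ) → ℂ) (hσ : AnalyticOnNhd ℂ σ U) (hσ0 : ∀ u ∈ U, σ u ≠ 0) (l5 l6 : ℂ)
    (h1 : ∀ u ∈ U, wp4 σ 4 5 5 5 u
      = 6 * wp2 σ 4 5 u * wp2 σ 5 5 u + 3 * wp2 σ 3 5 u + 3 * l6 * wp2 σ 5 5 u)
    (h2 : ∀ u ∈ U, wp4 σ 4 4 5 5 u
      = 4 * wp2 σ 2 5 u - wp2 σ 3 4 u + 3 * l6 * wp2 σ 4 5 u + 2 * l5
          + 2 * wp2 σ 4 4 u * wp2 σ 5 5 u + 4 * (wp2 σ 4 5 u) ^ 2) :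
    ∀ u ∈ U,
      0 = -2 * wp3 σ 2 5 5 u + 2 * wp3 σ 3 4 5 u - wp2 σ 4 4 u * wp3 σ 5 5 5 u
            - wp2 σ 4 5 u * wp3 σ 4 5 5 u + 2 * wp2 σ 5 5 u * wp3 σ 4 4 5 u := by
  have hL : ∀ m : Fin 6, AnalyticOnNhd ℂ (dlog σ m) U := fun m x hx =>
    ((pdA hσ m) x hx).div (hσ x hx) (hσ0 x hx)
  have hD1 : ∀ (j k : Fin 6), AnalyticOnNhd ℂ (pd j (dlog σ k)) U := fun j k => pdA (hL k) j
  have hD2 : ∀ (i j k : Fin 6), AnalyticOnNhd ℂ (pd i (pd j (dlog σ k))) U :=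
    fun i j k => pdA (hD1 j k) i
  have hw2 : ∀ (i j : Fin 6) (x : Fin 6 → ℂ), x ∈ U → DifferentiableAt ℂ (wp2 σ i j) x := by
    intro i j x hx
    exact (((hD1 i j) x hx).neg).differentiableAt
  intro u hu
  -- differentiability of the relevant 2-index functions at u
  have d25 := hw2 2 5 u hu
  have d34 := hw2 3 4 u hu
  have d35 := hw2 3 5 u hu
  have d44 := hw2 4 4 u hu
  have d45 := hw2 4 5 u hu
  have d55 := hw2 5 5 u hu
  -- symmetry lemmas for 3-index functions at u
  have wp3_out : ∀ i j k : Fin 6, wp3 σ i j k u = wp3 σ j i k u := by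
    intro i j k
    show -(pd i (pd j (dlog σ k)) u) = -(pd j (pd i (dlog σ k)) u)
    rw [pd_comm (hL k) hu]
  have wp3_in : ∀ i j k : Fin 6, wp3 σ i j k u = wp3 σ i k j u := by
    intro i j k
    show -(pd i (pd j (dlog σ k)) u) = -(pd i (pd k (dlog σ j)) u)
    rw [pd_congr hU hu (fun x hx => dlog_symm hU hσ hσ0 hx j k) i]
  -- differentiate h1 in direction 4
  have hA : pd 4 (wp4 σ 4 5 5 5) u
      = pd 4 (fun x => 6 * wp2 σ 4 5 x * wp2 σ 5 5 x + 3 * wp2 σ 3 5 x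
          + 3 * l6 * wp2 σ 5 5 x) u :=
    pd_congr hU hu h1 4
  have hAL : pd 4 (wp4 σ 4 5 5 5) u = -(pd 4 (pd 4 (pd 5 (pd 5 (dlog σ 5)))) u) := pd_neg
  have hAR : pd 4 (fun x => 6 * wp2 σ 4 5 x * wp2 σ 5 5 x + 3 * wp2 σ 3 5 x
          + 3 * l6 * wp2 σ 5 5 x) u
      = (6 * wp3 σ 4 4 5 u * wp2 σ 5 5 u + 6 * wp2 σ 4 5 u * wp3 σ 4 5 5 u)
          + 3 * wp3 σ 4 3 5 u + 3 * l6 * wp3 σ 4 5 5 u := by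
    rw [pd_add (((d45.const_mul 6).fun_mul d55).fun_add (d35.const_mul 3)) (d55.const_mul (3 * l6)),
      pd_add ((d45.const_mul 6).fun_mul d55) (d35.const_mul 3),
      pd_mul (d45.const_mul 6) d55,
      pd_const_mul d45 6, pd_const_mul d35 3, pd_const_mul d55 (3 * l6)]
    simp only [pd_wp2]
  -- differentiate h2 in direction 5
  have hB : pd 5 (wp4 σ 4 4 5 5) u
      = pd 5 (fun x => 4 * wp2 σ 2 5 x - wp2 σ 3 4 x + 3 * l6 * wp2 σ 4 5 x + 2 * l5
          + 2 * wp2 σ 4 4 x * wp2 σ 5 5 x + 4 * (wp2 σ 4 5 x) ^ 2) u :=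
    pd_congr hU hu h2 5
  have hBL : pd 5 (wp4 σ 4 4 5 5) u = -(pd 5 (pd 4 (pd 4 (pd 5 (dlog σ 5)))) u) := pd_neg
  have hsq : (fun x => 4 * (wp2 σ 4 5 x) ^ 2) = fun x => (4 * wp2 σ 4 5 x) * wp2 σ 4 5 x := by
    funext x; ring
  have hBR : pd 5 (fun x => 4 * wp2 σ 2 5 x - wp2 σ 3 4 x + 3 * l6 * wp2 σ 4 5 x + 2 * l5
          + 2 * wp2 σ 4 4 x * wp2 σ 5 5 x + 4 * (wp2 σ 4 5 x) ^ 2) u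
      = 4 * wp3 σ 5 2 5 u - wp3 σ 5 3 4 u + 3 * l6 * wp3 σ 5 4 5 u
          + (2 * wp3 σ 5 4 4 u * wp2 σ 5 5 u + 2 * wp2 σ 4 4 u * wp3 σ 5 5 5 u)
          + 8 * wp2 σ 4 5 u * wp3 σ 5 4 5 u := by
    have dsq : DifferentiableAt ℂ (fun x => 4 * (wp2 σ 4 5 x) ^ 2) u := by
      rw [hsq]; exact (d45.const_mul 4).mul d45
    rw [pd_add (((((d25.const_mul 4).fun_sub d34).fun_add (d45.const_mul (3 * l6))).fun_add
        (differentiableAt_const (2 * l5))).fun_add ((d44.const_mul 2).fun_mul d55)) dsq,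
      pd_add ((((d25.const_mul 4).fun_sub d34).fun_add (d45.const_mul (3 * l6))).fun_add
        (differentiableAt_const (2 * l5))) ((d44.const_mul 2).fun_mul d55),
      pd_add (((d25.const_mul 4).fun_sub d34).fun_add (d45.const_mul (3 * l6)))
        (differentiableAt_const (2 * l5)),
      pd_add ((d25.const_mul 4).fun_sub d34) (d45.const_mul (3 * l6)),
      pd_sub (d25.const_mul 4) d34,
      pd_mul (d44.const_mul 2) d55,
      pd_const_mul d25 4, pd_const_mul d45 (3 * l6),
      pd_const_mul d44 2, pd_const (2 * l5), hsq,
      pd_mul (d45.const_mul 4) d45, pd_const_mul d45 4]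
    simp only [pd_wp2]
    ring
  -- equality of the two mixed fifth derivatives
  have comm5 : pd 4 (pd 4 (pd 5 (pd 5 (dlog σ 5)))) u
      = pd 5 (pd 4 (pd 4 (pd 5 (dlog σ 5)))) u := by
    have c1 : pd 5 (pd 4 (pd 4 (pd 5 (dlog σ 5)))) u
        = pd 4 (pd 5 (pd 4 (pd 5 (dlog σ 5)))) u := pd_comm (hD2 4 5 5) hu 5 4
    have c2 : ∀ x ∈ U, pd 5 (pd 4 (pd 5 (dlog σ 5))) x = pd 4 (pd 5 (pd 5 (dlog σ 5))) x :=
      fun x hx => pd_comm (hD1 5 5) hx 5 4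
    have c3 : pd 4 (pd 5 (pd 4 (pd 5 (dlog σ 5)))) u
        = pd 4 (pd 4 (pd 5 (pd 5 (dlog σ 5)))) u := pd_congr hU hu c2 4
    exact (c1.trans c3).symm
  -- combine
  have hAB : (6 * wp3 σ 4 4 5 u * wp2 σ 5 5 u + 6 * wp2 σ 4 5 u * wp3 σ 4 5 5 u)
          + 3 * wp3 σ 4 3 5 u + 3 * l6 * wp3 σ 4 5 5 u
      = 4 * wp3 σ 5 2 5 u - wp3 σ 5 3 4 u + 3 * l6 * wp3 σ 5 4 5 u
          + (2 * wp3 σ 5 4 4 u * wp2 σ 5 5 u + 2 * wp2 σ 4 4 u * wp3 σ 5 5 5 u)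
          + 8 * wp2 σ 4 5 u * wp3 σ 5 4 5 u := by
    rw [← hAR, ← hBR, ← hA, ← hB, hAL, hBL, comm5]
  -- normalise indices
  have e1 : wp3 σ 4 3 5 u = wp3 σ 3 4 5 u := wp3_out 4 3 5
  have e2 : wp3 σ 5 2 5 u = wp3 σ 2 5 5 u := wp3_out 5 2 5
  have e3 : wp3 σ 5 3 4 u = wp3 σ 3 4 5 u := by
    rw [wp3_out 5 3 4, wp3_in 3 5 4]
  have e4 : wp3 σ 5 4 5 u = wp3 σ 4 5 5 u := wp3_out 5 4 5
  have e5 : wp3 σ 5 4 4 u = wp3 σ 4 4 5 u := by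
    rw [wp3_out 5 4 4, wp3_in 4 5 4]
  rw [e1, e2, e3, e4, e5] at hAB
  linear_combination (-1 / 2 : ℂ) * hAB
end
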